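/- For every constant α > 12, the function p(x,y) = |x − y|/√((x − y)² + αxy) on ℝ⁺ fails the triangle inequality: there exist x, y, z > 0 with p(x,y) > p(x,z) + p(z,y). -/

import Mathlib

theorem ppf_alpha_Rpos_not_metric (α : ℝ) (h12 : 12 < α)
    (p : ℝ → ℝ → ℝ)
    (hp : ∀ x y, p x y = |x - y| / Real.sqrt ((x - y)^2 + α*x*y)) :
    ∃ x y z : ℝ, 0 < x ∧ 0 < y ∧ 0 < z ∧ p x y > p x z + p z y := by
  obtain ⟨r, hr1, hkey⟩ : ∃ r : ℝ, 1 < r ∧ 3 * (r + 1)^2 < α * r := by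
    refine ⟨1 + min 1 ((α - 12) / 6), ?_, ?_⟩
    · have : (0:ℝ) < min 1 ((α - 12) / 6) := lt_min one_pos (by linarith)
      linarith
    · set ε : ℝ := min 1 ((α - 12) / 6) with hε
      have hε0 : 0 < ε := lt_min one_pos (by linarith)
      have hε1 : ε ≤ 1 := min_le_left _ _
      have hε2 : ε ≤ (α - 12) / 6 := min_le_right _ _
      nlinarith [sq_nonneg ε]
  have hr0 : 0 < r := by linarith
  refine ⟨1, r^2, r, one_pos, by positivity, hr0, ?_⟩
  have ha : 0 < r - 1 := by linarith
  set D : ℝ := (1 - r)^2 + α * 1 * r with hD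
  set B : ℝ := (1 - r^2)^2 + α * 1 * r^2 with hB
  have hDpos : 0 < D := by nlinarith
  have hBpos : 0 < B := by nlinarith
  have hsD : 0 < Real.sqrt D := Real.sqrt_pos.2 hDpos
  have hsB : 0 < Real.sqrt B := Real.sqrt_pos.2 hBpos
  have e1 : p 1 (r^2) = (r^2 - 1) / Real.sqrt B := by
    rw [hp]
    rw [abs_of_nonpos (by nlinarith)]
    rw [hB]; ring_nf
  have e2 : p 1 r = (r - 1) / Real.sqrt D := by
    rw [hp]
    rw [abs_of_nonpos (by linarith)]
    rw [hD]; ring_nf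
  have e3 : p r (r^2) = (r - 1) / Real.sqrt D := by
    rw [hp]
    rw [abs_of_nonpos (by nlinarith)]
    have h1 : (r - r^2)^2 + α * r * r^2 = r^2 * D := by rw [hD]; ring
    rw [h1, Real.sqrt_mul (by positivity), Real.sqrt_sq hr0.le]
    rw [show -(r - r^2) = r * (r - 1) by ring]
    rw [mul_div_mul_left _ _ (ne_of_gt hr0)]
  rw [e1, e2, e3]
  rw [gt_iff_lt, ← add_div, div_lt_div_iff₀ hsD hsB]
  have hsq : ((r - 1) + (r - 1))^2 * B < (r^2 - 1)^2 * D := by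
    have hDB : (r^2 - 1)^2 * D - ((r - 1) + (r - 1))^2 * B
        = (r - 1)^4 * (α * r - 3 * (r + 1)^2) := by
      rw [hD, hB]; ring
    nlinarith [pow_pos ha 4]
  have hLB : ((r - 1) + (r - 1)) * Real.sqrt B ≥ 0 := by positivity
  have hRD : 0 ≤ (r^2 - 1) * Real.sqrt D := by nlinarith
  have hsq2 : (((r - 1) + (r - 1)) * Real.sqrt B)^2 < ((r^2 - 1) * Real.sqrt D)^2 := by
    rw [mul_pow, mul_pow, Real.sq_sqrt hBpos.le, Real.sq_sqrt hDpos.le]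
    exact hsq
  nlinarith [hsq2, hLB, hRD]
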